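/- Let k be a field, V a nonzero k-vector space and M a k-vector space. If the pair (F, Φ) satisfies the modified pentagon equation, then Φ satisfies the pentagon equation: Φ_{12} ∘ Φ_{13} ∘ Φ_{23} = Φ_{23} ∘ Φ_{12} as maps M ⊗ M ⊗ M → M ⊗ M ⊗ M. -/

import Mathlib

open TensorProduct

noncomputable section

variable {k : Type*} [Field k]

/-- Apply `G` to tensor factors 1 and 2 of a triple tensor product. -/
def m12 {A B C P Q : Type*}
    [AddCommGroup A] [AddCommGroup B] [AddCommGroup C] [AddCommGroup P] [AddCommGroup Q]
    [Module k A] [Module k B] [Module k C] [Module k P] [Module k Q]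
    (G : A ⊗[k] B →ₗ[k] P ⊗[k] Q) :
    A ⊗[k] (B ⊗[k] C) →ₗ[k] P ⊗[k] (Q ⊗[k] C) :=
  (TensorProduct.assoc k P Q C).toLinearMap ∘ₗ G.rTensor C ∘ₗ
    (TensorProduct.assoc k A B C).symm.toLinearMap

/-- Apply `G` to tensor factors 2 and 3 of a triple tensor product. -/
def m23 {A B C Q R : Type*}
    [AddCommGroup A] [AddCommGroup B] [AddCommGroup C] [AddCommGroup Q] [AddCommGroup R]
    [Module k A] [Module k B] [Module k C] [Module k Q] [Module k R]
    (G : B ⊗[k] C →ₗ[k] Q ⊗[k] R) :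
    A ⊗[k] (B ⊗[k] C) →ₗ[k] A ⊗[k] (Q ⊗[k] R) :=
  G.lTensor A

/-- Apply `G` to tensor factors 1 and 3 of a triple tensor product. -/
def m13 {A B C P R : Type*}
    [AddCommGroup A] [AddCommGroup B] [AddCommGroup C] [AddCommGroup P] [AddCommGroup R]
    [Module k A] [Module k B] [Module k C] [Module k P] [Module k R]
    (G : A ⊗[k] C →ₗ[k] P ⊗[k] R) :
    A ⊗[k] (B ⊗[k] C) →ₗ[k] P ⊗[k] (B ⊗[k] R) :=
  ((TensorProduct.comm k R B).toLinearMap.lTensor P) ∘ₗ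
    (TensorProduct.assoc k P R B).toLinearMap ∘ₗ G.rTensor B ∘ₗ
    (TensorProduct.assoc k A C B).symm.toLinearMap ∘ₗ
    ((TensorProduct.comm k B C).toLinearMap.lTensor A)

/-- The modified pentagon equation for a pair `(F, Φ)`:
`F₁₂ ∘ F₁₃ ∘ Φ₂₃ = F₂₃ ∘ F₁₂` as maps `V ⊗ M ⊗ M → V ⊗ V ⊗ V`. -/
def MPE {V M : Type*} [AddCommGroup V] [AddCommGroup M] [Module k V] [Module k M]
    (F : V ⊗[k] M →ₗ[k] V ⊗[k] V) (Φ : M ⊗[k] M →ₗ[k] M ⊗[k] M) : Prop :=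
  m12 F ∘ₗ m13 F ∘ₗ m23 Φ = m23 F ∘ₗ m12 F

/-- The pentagon equation: `Φ₁₂ ∘ Φ₁₃ ∘ Φ₂₃ = Φ₂₃ ∘ Φ₁₂` on `M ⊗ M ⊗ M`. -/
def PE {M : Type*} [AddCommGroup M] [Module k M]
    (Φ : M ⊗[k] M →ₗ[k] M ⊗[k] M) : Prop :=
  m12 Φ ∘ₗ m13 Φ ∘ₗ m23 Φ = m23 Φ ∘ₗ m12 Φ

/-! ### Auxiliary machinery -/

section Aux

variable {A B C D P Q R S Y Z : Type}
variable [AddCommGroup A] [AddCommGroup B] [AddCommGroup C] [AddCommGroup D]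
  [AddCommGroup P] [AddCommGroup Q] [AddCommGroup R] [AddCommGroup S]
  [AddCommGroup Y] [AddCommGroup Z]
variable [Module k A] [Module k B] [Module k C] [Module k D] [Module k P] [Module k Q]
  [Module k R] [Module k S] [Module k Y] [Module k Z]

lemma m12_apply (G : A ⊗[k] B →ₗ[k] P ⊗[k] Q) (a : A) (b : B) (y : C) :
    m12 G (a ⊗ₜ (b ⊗ₜ y)) = TensorProduct.assoc k P Q C (G (a ⊗ₜ b) ⊗ₜ y) := by
  simp [m12]

lemma m13_apply (G : A ⊗[k] C →ₗ[k] P ⊗[k] R) (a : A) (b : B) (c : C) :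
    m13 G (a ⊗ₜ (b ⊗ₜ c)) =
      ((TensorProduct.comm k R B).toLinearMap.lTensor P)
        (TensorProduct.assoc k P R B (G (a ⊗ₜ c) ⊗ₜ b)) := by
  simp [m13]

/-- Swap the first two factors of a triple tensor product. -/
def aLC : A ⊗[k] (B ⊗[k] Y) ≃ₗ[k] B ⊗[k] (A ⊗[k] Y) :=
  (TensorProduct.assoc k A B Y).symm ≪≫ₗ
    (TensorProduct.congr (TensorProduct.comm k A B) (LinearEquiv.refl k Y)) ≪≫ₗ
    TensorProduct.assoc k B A Y

@[simp] lemma aLC_tmul (a : A) (b : B) (y : Y) :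
    aLC (k := k) (a ⊗ₜ (b ⊗ₜ y)) = b ⊗ₜ[k] (a ⊗ₜ y) := by simp [aLC]

@[simp] lemma aLC_symm_tmul (a : A) (b : B) (y : Y) :
    (aLC (k := k) (A := A) (B := B) (Y := Y)).symm (b ⊗ₜ (a ⊗ₜ y)) = a ⊗ₜ (b ⊗ₜ y) := by
  simp [aLC]

/-- Regroup `A ⊗ (B ⊗ (C ⊗ D))` as `(A ⊗ (B ⊗ C)) ⊗ D`. -/
def rho : A ⊗[k] (B ⊗[k] (C ⊗[k] D)) ≃ₗ[k] (A ⊗[k] (B ⊗[k] C)) ⊗[k] D :=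
  (TensorProduct.congr (LinearEquiv.refl k A) (TensorProduct.assoc k B C D).symm) ≪≫ₗ
    (TensorProduct.assoc k A (B ⊗[k] C) D).symm

@[simp] lemma rho_tmul (a : A) (b : B) (c : C) (d : D) :
    rho (k := k) (a ⊗ₜ (b ⊗ₜ (c ⊗ₜ d))) = (a ⊗ₜ (b ⊗ₜ c)) ⊗ₜ[k] d := by
  simp [rho]

@[simp] lemma rho_symm_tmul (a : A) (b : B) (c : C) (d : D) :
    (rho (k := k) (A := A) (B := B) (C := C) (D := D)).symm ((a ⊗ₜ (b ⊗ₜ c)) ⊗ₜ d) =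
      a ⊗ₜ (b ⊗ₜ (c ⊗ₜ d)) := by
  simp [rho]

/-- Regroup `A ⊗ (B ⊗ (C ⊗ D))` as `(A ⊗ (B ⊗ D)) ⊗ C`. -/
def tau : A ⊗[k] (B ⊗[k] (C ⊗[k] D)) ≃ₗ[k] (A ⊗[k] (B ⊗[k] D)) ⊗[k] C :=
  (TensorProduct.congr (LinearEquiv.refl k A)
      (TensorProduct.congr (LinearEquiv.refl k B) (TensorProduct.comm k C D))) ≪≫ₗ
    rho

@[simp] lemma tau_tmul (a : A) (b : B) (c : C) (d : D) :
    tau (k := k) (a ⊗ₜ (b ⊗ₜ (c ⊗ₜ d))) = (a ⊗ₜ (b ⊗ₜ d)) ⊗ₜ[k] c := by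
  simp [tau]

@[simp] lemma tau_symm_tmul (a : A) (b : B) (c : C) (d : D) :
    (tau (k := k) (A := A) (B := B) (C := C) (D := D)).symm ((a ⊗ₜ (b ⊗ₜ d)) ⊗ₜ c) =
      a ⊗ₜ (b ⊗ₜ (c ⊗ₜ d)) := by
  simp [tau]

/-- Regroup `A ⊗ (B ⊗ (C ⊗ D))` as `A ⊗ ((B ⊗ C) ⊗ D)`. -/
def bet : A ⊗[k] (B ⊗[k] (C ⊗[k] D)) ≃ₗ[k] A ⊗[k] ((B ⊗[k] C) ⊗[k] D) :=
  TensorProduct.congr (LinearEquiv.refl k A) (TensorProduct.assoc k B C D).symm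

@[simp] lemma bet_tmul (a : A) (b : B) (c : C) (d : D) :
    bet (k := k) (a ⊗ₜ (b ⊗ₜ (c ⊗ₜ d))) = a ⊗ₜ[k] ((b ⊗ₜ c) ⊗ₜ d) := by
  simp [bet]

@[simp] lemma bet_symm_tmul (a : A) (b : B) (c : C) (d : D) :
    (bet (k := k) (A := A) (B := B) (C := C) (D := D)).symm (a ⊗ₜ ((b ⊗ₜ c) ⊗ₜ d)) =
      a ⊗ₜ (b ⊗ₜ (c ⊗ₜ d)) := by
  simp [bet]

/-- Apply `G` to tensor factors 1 and 3 of a 4-fold tensor product. -/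
def n13 (G : A ⊗[k] C →ₗ[k] P ⊗[k] Q) :
    A ⊗[k] (B ⊗[k] (C ⊗[k] D)) →ₗ[k] P ⊗[k] (B ⊗[k] (Q ⊗[k] D)) :=
  (aLC (k := k) (A := P) (B := B) (Y := Q ⊗[k] D)).symm.toLinearMap ∘ₗ
    (m12 (C := D) G).lTensor B ∘ₗ (aLC (k := k) (A := A) (B := B) (Y := C ⊗[k] D)).toLinearMap

/-- Apply `G` to tensor factors 1 and 4 of a 4-fold tensor product. -/
def n14 (G : A ⊗[k] D →ₗ[k] P ⊗[k] S) :
    A ⊗[k] (B ⊗[k] (C ⊗[k] D)) →ₗ[k] P ⊗[k] (B ⊗[k] (C ⊗[k] S)) :=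
  (aLC (k := k) (A := P) (B := B) (Y := C ⊗[k] S)).symm.toLinearMap ∘ₗ
    (m13 (B := C) G).lTensor B ∘ₗ (aLC (k := k) (A := A) (B := B) (Y := C ⊗[k] D)).toLinearMap

/-- Naturality of `aLC` with respect to maps on the third slot. -/
lemma aLC_natural (h : Y →ₗ[k] Z) :
    (aLC (k := k) (A := A) (B := B) (Y := Z)).toLinearMap ∘ₗ ((h.lTensor B).lTensor A) =
      ((h.lTensor A).lTensor B) ∘ₗ (aLC (k := k) (A := A) (B := B) (Y := Y)).toLinearMap := by
  ext a b y
  simp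

lemma aLC_natural_symm (h : Y →ₗ[k] Z) :
    ((h.lTensor B).lTensor A) ∘ₗ (aLC (k := k) (A := A) (B := B) (Y := Y)).symm.toLinearMap =
      (aLC (k := k) (A := A) (B := B) (Y := Z)).symm.toLinearMap ∘ₗ ((h.lTensor A).lTensor B) := by
  ext b a y
  simp

/-- `m12` commutes with maps acting on the third slot. -/
lemma m12_comm_third (G : A ⊗[k] B →ₗ[k] P ⊗[k] Q) (h : Y →ₗ[k] Z) :
    m12 (C := Z) G ∘ₗ ((h.lTensor B).lTensor A) =
      ((h.lTensor Q).lTensor P) ∘ₗ m12 (C := Y) G := by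
  ext a b y
  simp only [AlgebraTensorModule.curry_apply, curry_apply, LinearMap.coe_restrictScalars,
    LinearMap.comp_apply, LinearMap.lTensor_tmul, m12_apply]
  generalize G (a ⊗ₜ b) = z
  induction z using TensorProduct.induction_on with
  | zero => simp
  | tmul p q => simp
  | add z₁ z₂ h₁ h₂ => simp only [add_tmul, map_add, h₁, h₂]

/-- `m13` commutes with maps acting on the middle slot. -/
lemma m13_comm_mid (G : A ⊗[k] C →ₗ[k] P ⊗[k] R) (h : Y →ₗ[k] Z) :
    m13 (B := Z) G ∘ₗ ((h.rTensor C).lTensor A) =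
      ((h.rTensor R).lTensor P) ∘ₗ m13 (B := Y) G := by
  ext a y c
  simp only [AlgebraTensorModule.curry_apply, curry_apply, LinearMap.coe_restrictScalars,
    LinearMap.comp_apply, LinearMap.lTensor_tmul, LinearMap.rTensor_tmul, m13_apply]
  generalize G (a ⊗ₜ c) = z
  induction z using TensorProduct.induction_on with
  | zero => simp
  | tmul p q => simp
  | add z₁ z₂ h₁ h₂ => simp only [add_tmul, map_add, h₁, h₂]

lemma m12_split_rho (G : A ⊗[k] B →ₗ[k] P ⊗[k] Q) :
    m12 (C := C ⊗[k] D) G =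
      (rho (k := k) (A := P) (B := Q) (C := C) (D := D)).symm.toLinearMap ∘ₗ
        (m12 (C := C) G).rTensor D ∘ₗ
        (rho (k := k) (A := A) (B := B) (C := C) (D := D)).toLinearMap := by
  ext a b c d
  simp only [AlgebraTensorModule.curry_apply, curry_apply, LinearMap.coe_restrictScalars,
    LinearMap.comp_apply, LinearEquiv.coe_coe, rho_tmul, LinearMap.rTensor_tmul, m12_apply]
  generalize G (a ⊗ₜ b) = z
  induction z using TensorProduct.induction_on with
  | zero => simp
  | tmul p q => simp
  | add z₁ z₂ h₁ h₂ => simp only [add_tmul, map_add, h₁, h₂]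

lemma m12_split_tau (G : A ⊗[k] B →ₗ[k] P ⊗[k] Q) :
    m12 (C := C ⊗[k] D) G =
      (tau (k := k) (A := P) (B := Q) (C := C) (D := D)).symm.toLinearMap ∘ₗ
        (m12 (C := D) G).rTensor C ∘ₗ
        (tau (k := k) (A := A) (B := B) (C := C) (D := D)).toLinearMap := by
  ext a b c d
  simp only [AlgebraTensorModule.curry_apply, curry_apply, LinearMap.coe_restrictScalars,
    LinearMap.comp_apply, LinearEquiv.coe_coe, tau_tmul, LinearMap.rTensor_tmul, m12_apply]
  generalize G (a ⊗ₜ b) = z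
  induction z using TensorProduct.induction_on with
  | zero => simp
  | tmul p q => simp
  | add z₁ z₂ h₁ h₂ => simp only [add_tmul, map_add, h₁, h₂]

lemma n13_split_rho (G : A ⊗[k] C →ₗ[k] P ⊗[k] Q) :
    n13 (B := B) (D := D) G =
      (rho (k := k) (A := P) (B := B) (C := Q) (D := D)).symm.toLinearMap ∘ₗ
        (m13 (B := B) G).rTensor D ∘ₗ
        (rho (k := k) (A := A) (B := B) (C := C) (D := D)).toLinearMap := by
  ext a b c d
  simp only [n13, AlgebraTensorModule.curry_apply, curry_apply, LinearMap.coe_restrictScalars,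
    LinearMap.comp_apply, LinearEquiv.coe_coe, rho_tmul, aLC_tmul, LinearMap.rTensor_tmul,
    LinearMap.lTensor_tmul, m12_apply, m13_apply]
  generalize G (a ⊗ₜ c) = z
  induction z using TensorProduct.induction_on with
  | zero => simp
  | tmul p q => simp
  | add z₁ z₂ h₁ h₂ => simp only [add_tmul, map_add, tmul_add, h₁, h₂]

lemma n14_split_tau (G : A ⊗[k] D →ₗ[k] P ⊗[k] S) :
    n14 (B := B) (C := C) G =
      (tau (k := k) (A := P) (B := B) (C := C) (D := S)).symm.toLinearMap ∘ₗ
        (m13 (B := B) G).rTensor C ∘ₗ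
        (tau (k := k) (A := A) (B := B) (C := C) (D := D)).toLinearMap := by
  ext a b c d
  simp only [n14, AlgebraTensorModule.curry_apply, curry_apply, LinearMap.coe_restrictScalars,
    LinearMap.comp_apply, LinearEquiv.coe_coe, tau_tmul, aLC_tmul, LinearMap.rTensor_tmul,
    LinearMap.lTensor_tmul, m13_apply]
  generalize G (a ⊗ₜ d) = z
  induction z using TensorProduct.induction_on with
  | zero => simp
  | tmul p q => simp
  | add z₁ z₂ h₁ h₂ => simp only [add_tmul, map_add, tmul_add, h₁, h₂]

lemma lT_m12_split_rho (H : B ⊗[k] C →ₗ[k] Q ⊗[k] R) :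
    (m12 (C := D) H).lTensor A =
      (rho (k := k) (A := A) (B := Q) (C := R) (D := D)).symm.toLinearMap ∘ₗ
        (H.lTensor A).rTensor D ∘ₗ
        (rho (k := k) (A := A) (B := B) (C := C) (D := D)).toLinearMap := by
  ext a b c d
  simp only [AlgebraTensorModule.curry_apply, curry_apply, LinearMap.coe_restrictScalars,
    LinearMap.comp_apply, LinearEquiv.coe_coe, rho_tmul, LinearMap.rTensor_tmul,
    LinearMap.lTensor_tmul, m12_apply]
  generalize H (b ⊗ₜ c) = z
  induction z using TensorProduct.induction_on with
  | zero => simp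
  | tmul p q => simp
  | add z₁ z₂ h₁ h₂ => simp only [add_tmul, map_add, tmul_add, h₁, h₂]

lemma lT_m13_split_tau (H : B ⊗[k] D →ₗ[k] Q ⊗[k] S) :
    (m13 (B := C) H).lTensor A =
      (tau (k := k) (A := A) (B := Q) (C := C) (D := S)).symm.toLinearMap ∘ₗ
        (H.lTensor A).rTensor C ∘ₗ
        (tau (k := k) (A := A) (B := B) (C := C) (D := D)).toLinearMap := by
  ext a b c d
  simp only [AlgebraTensorModule.curry_apply, curry_apply, LinearMap.coe_restrictScalars,
    LinearMap.comp_apply, LinearEquiv.coe_coe, tau_tmul, LinearMap.rTensor_tmul,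
    LinearMap.lTensor_tmul, m13_apply]
  generalize H (b ⊗ₜ d) = z
  induction z using TensorProduct.induction_on with
  | zero => simp
  | tmul p q => simp
  | add z₁ z₂ h₁ h₂ => simp only [add_tmul, map_add, tmul_add, h₁, h₂]

lemma lT_m12_bet (H : B ⊗[k] C →ₗ[k] Q ⊗[k] R) :
    (m12 (C := D) H).lTensor A =
      (bet (k := k) (A := A) (B := Q) (C := R) (D := D)).symm.toLinearMap ∘ₗ
        ((H.rTensor D).lTensor A) ∘ₗ
        (bet (k := k) (A := A) (B := B) (C := C) (D := D)).toLinearMap := by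
  ext a b c d
  simp only [AlgebraTensorModule.curry_apply, curry_apply, LinearMap.coe_restrictScalars,
    LinearMap.comp_apply, LinearEquiv.coe_coe, bet_tmul, LinearMap.rTensor_tmul,
    LinearMap.lTensor_tmul, m12_apply]
  generalize H (b ⊗ₜ c) = z
  induction z using TensorProduct.induction_on with
  | zero => simp
  | tmul p q => simp
  | add z₁ z₂ h₁ h₂ => simp only [add_tmul, map_add, tmul_add, h₁, h₂]

lemma n14_bet (G : A ⊗[k] D →ₗ[k] P ⊗[k] S) :
    n14 (B := B) (C := C) G =
      (bet (k := k) (A := P) (B := B) (C := C) (D := S)).symm.toLinearMap ∘ₗ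
        (m13 (B := B ⊗[k] C) G) ∘ₗ
        (bet (k := k) (A := A) (B := B) (C := C) (D := D)).toLinearMap := by
  ext a b c d
  simp only [n14, AlgebraTensorModule.curry_apply, curry_apply, LinearMap.coe_restrictScalars,
    LinearMap.comp_apply, LinearEquiv.coe_coe, bet_tmul, aLC_tmul, LinearMap.rTensor_tmul,
    LinearMap.lTensor_tmul, m13_apply]
  generalize G (a ⊗ₜ d) = z
  induction z using TensorProduct.induction_on with
  | zero => simp
  | tmul p q => simp
  | add z₁ z₂ h₁ h₂ => simp only [add_tmul, map_add, tmul_add, h₁, h₂]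

/-! ### Injectivity -/

lemma m12_inj (G : A ⊗[k] B ≃ₗ[k] P ⊗[k] Q) :
    Function.Injective ⇑(m12 (C := C) G.toLinearMap) := by
  unfold m12
  simp only [LinearMap.coe_comp, LinearEquiv.coe_coe]
  exact (TensorProduct.assoc k P Q C).injective.comp
    ((Module.Flat.rTensor_preserves_injective_linearMap _ G.injective).comp
      (TensorProduct.assoc k A B C).symm.injective)

lemma m13_inj (G : A ⊗[k] C ≃ₗ[k] P ⊗[k] R) :
    Function.Injective ⇑(m13 (B := B) G.toLinearMap) := by
  unfold m13
  simp only [LinearMap.coe_comp, LinearEquiv.coe_coe]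
  refine (Module.Flat.lTensor_preserves_injective_linearMap _
    (TensorProduct.comm k R B).injective).comp ?_
  refine ((TensorProduct.assoc k P R B).injective).comp ?_
  refine (Module.Flat.rTensor_preserves_injective_linearMap _ G.injective).comp ?_
  exact ((TensorProduct.assoc k A C B).symm.injective).comp
    (Module.Flat.lTensor_preserves_injective_linearMap _ (TensorProduct.comm k B C).injective)

lemma n13_inj (G : A ⊗[k] C ≃ₗ[k] P ⊗[k] Q) :
    Function.Injective ⇑(n13 (B := B) (D := D) G.toLinearMap) := by
  unfold n13
  simp only [LinearMap.coe_comp, LinearEquiv.coe_coe]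
  exact ((aLC (k := k)).symm.injective).comp
    ((Module.Flat.lTensor_preserves_injective_linearMap _ (m12_inj (C := D) G)).comp
      (aLC (k := k)).injective)

lemma n14_inj (G : A ⊗[k] D ≃ₗ[k] P ⊗[k] S) :
    Function.Injective ⇑(n14 (B := B) (C := C) G.toLinearMap) := by
  unfold n14
  simp only [LinearMap.coe_comp, LinearEquiv.coe_coe]
  exact ((aLC (k := k)).symm.injective).comp
    ((Module.Flat.lTensor_preserves_injective_linearMap _ (m13_inj (B := C) G)).comp
      (aLC (k := k)).injective)

/-- If `V ≠ 0` then `f ↦ f.lTensor V` is injective. -/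
lemma lTensor_cancel {V N P' : Type} [AddCommGroup V] [Module k V] [Nontrivial V]
    [AddCommGroup N] [AddCommGroup P'] [Module k N] [Module k P']
    {f g : N →ₗ[k] P'} (h : f.lTensor V = g.lTensor V) : f = g := by
  obtain ⟨v, hv⟩ := exists_ne (0 : V)
  obtain ⟨r, hr⟩ := (LinearMap.toSpanSingleton k V v).exists_leftInverse_of_injective
    (LinearMap.ker_toSpanSingleton (R := k) (M := V) hv)
  have hrv : r v = 1 := by
    have := LinearMap.congr_fun hr 1
    simpa using this
  ext x
  have e : ∀ j : N →ₗ[k] P',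
      j x = TensorProduct.lid k P' ((r.rTensor P') ((j.lTensor V) (v ⊗ₜ x))) := by
    intro j
    simp [hrv]
  rw [e f, e g, h]

end Aux

/-! ### The modified pentagon instances on the 4-fold tensor product -/

section Inst

variable {V M : Type} [AddCommGroup V] [AddCommGroup M] [Module k V] [Module k M]

/-- MPE instance on slots (1,2,3) of `V ⊗ (M ⊗ (M ⊗ D))`, spectator in slot 4. -/
lemma I2lem {D : Type} [AddCommGroup D] [Module k D]
    (f : V ⊗[k] M →ₗ[k] V ⊗[k] V) (φ : M ⊗[k] M →ₗ[k] M ⊗[k] M)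
    (h : m12 (C := V) f ∘ₗ m13 (B := M) f ∘ₗ φ.lTensor V = f.lTensor V ∘ₗ m12 (C := M) f) :
    m12 (C := V ⊗[k] D) f ∘ₗ n13 (B := M) (D := D) f ∘ₗ (m12 (C := D) φ).lTensor V
      = (m12 (C := D) f).lTensor V ∘ₗ m12 (C := M ⊗[k] D) f := by
  have key := congrArg (LinearMap.rTensor D) h
  simp only [LinearMap.rTensor_comp] at key
  rw [m12_split_rho (C := V) (D := D) f, m12_split_rho (C := M) (D := D) f,
      n13_split_rho (B := M) (D := D) f, lT_m12_split_rho (A := V) (D := D) φ,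
      lT_m12_split_rho (A := V) (D := D) f]
  refine LinearMap.ext fun x => ?_
  simp only [LinearMap.comp_apply, LinearEquiv.coe_coe, LinearEquiv.apply_symm_apply]
  have kx := LinearMap.congr_fun key ((rho (k := k) (A := V) (B := M) (C := M) (D := D)) x)
  simp only [LinearMap.comp_apply] at kx
  rw [kx]

/-- MPE instance on slots (1,2,4) of `V ⊗ (M ⊗ (M ⊗ M))`, spectator in slot 3. -/
lemma I3lem (f : V ⊗[k] M →ₗ[k] V ⊗[k] V) (φ : M ⊗[k] M →ₗ[k] M ⊗[k] M)
    (h : m12 (C := V) f ∘ₗ m13 (B := M) f ∘ₗ φ.lTensor V = f.lTensor V ∘ₗ m12 (C := M) f) :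
    m12 (C := M ⊗[k] V) f ∘ₗ n14 (B := M) (C := M) f ∘ₗ (m13 (B := M) φ).lTensor V
      = (m13 (B := M) f).lTensor V ∘ₗ m12 (C := M ⊗[k] M) f := by
  have key := congrArg (LinearMap.rTensor M) h
  simp only [LinearMap.rTensor_comp] at key
  rw [m12_split_tau (C := M) (D := V) f, m12_split_tau (C := M) (D := M) f,
      n14_split_tau (B := M) (C := M) f, lT_m13_split_tau (A := V) (C := M) φ,
      lT_m13_split_tau (A := V) (C := M) f]
  refine LinearMap.ext fun x => ?_
  simp only [LinearMap.comp_apply, LinearEquiv.coe_coe, LinearEquiv.apply_symm_apply]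
  have kx := LinearMap.congr_fun key ((tau (k := k) (A := V) (B := M) (C := M) (D := M)) x)
  simp only [LinearMap.comp_apply] at kx
  rw [kx]

/-- MPE instance on slots (1,3,4) of `V ⊗ (B' ⊗ (M ⊗ M))`, spectator in slot 2. -/
lemma I1lem {B' : Type} [AddCommGroup B'] [Module k B']
    (f : V ⊗[k] M →ₗ[k] V ⊗[k] V) (φ : M ⊗[k] M →ₗ[k] M ⊗[k] M)
    (h : m12 (C := V) f ∘ₗ m13 (B := M) f ∘ₗ φ.lTensor V = f.lTensor V ∘ₗ m12 (C := M) f) :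
    n13 (B := B') (D := V) f ∘ₗ n14 (B := B') (C := M) f ∘ₗ ((φ.lTensor B').lTensor V)
      = ((f.lTensor B').lTensor V) ∘ₗ n13 (B := B') (D := M) f := by
  have key := congrArg (LinearMap.lTensor B') h
  simp only [LinearMap.lTensor_comp] at key
  have natφ := aLC_natural (k := k) (A := V) (B := B') (h := φ)
  have natf := aLC_natural_symm (k := k) (A := V) (B := B') (h := f)
  refine LinearMap.ext fun x => ?_
  simp only [n13, n14, LinearMap.comp_apply, LinearEquiv.coe_coe, LinearEquiv.apply_symm_apply]
  have h1 := LinearMap.congr_fun natφ x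
  simp only [LinearMap.comp_apply, LinearEquiv.coe_coe] at h1
  rw [h1]
  have h2 := LinearMap.congr_fun key ((aLC (k := k) (A := V) (B := B') (Y := M ⊗[k] M)) x)
  simp only [LinearMap.comp_apply] at h2
  rw [h2]
  have h3 := LinearMap.congr_fun natf
    (((m12 (C := M) f).lTensor B') ((aLC (k := k) (A := V) (B := B') (Y := M ⊗[k] M)) x))
  simp only [LinearMap.comp_apply, LinearEquiv.coe_coe] at h3
  rw [h3]

/-- Maps on slots (1,4) commute with maps on slots (2,3). -/
lemma K1lem (f : V ⊗[k] M →ₗ[k] V ⊗[k] V) (φ : M ⊗[k] M →ₗ[k] M ⊗[k] M) :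
    n14 (B := M) (C := M) f ∘ₗ (m12 (C := M) φ).lTensor V
      = (m12 (C := V) φ).lTensor V ∘ₗ n14 (B := M) (C := M) f := by
  have mid := m13_comm_mid (G := f) (h := φ)
  rw [n14_bet (B := M) (C := M) f, lT_m12_bet (A := V) (D := M) φ,
      lT_m12_bet (A := V) (D := V) φ]
  refine LinearMap.ext fun x => ?_
  simp only [LinearMap.comp_apply, LinearEquiv.coe_coe, LinearEquiv.apply_symm_apply,
    LinearEquiv.symm_apply_apply]
  have hm := LinearMap.congr_fun mid ((bet (k := k) (A := V) (B := M) (C := M) (D := M)) x)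
  simp only [LinearMap.comp_apply] at hm
  rw [hm]

end Inst

/-- If `(F, Φ)` satisfies the modified pentagon equation (with `V ≠ 0`),
then `Φ` satisfies the pentagon equation. -/
theorem stmt6 {V M : Type}
    [AddCommGroup V] [Module k V] [Nontrivial V]
    [AddCommGroup M] [Module k M]
    (F : V ⊗[k] M ≃ₗ[k] V ⊗[k] V) (Φ : M ⊗[k] M ≃ₗ[k] M ⊗[k] M)
    (hFΦ : MPE F.toLinearMap Φ.toLinearMap) :
    PE Φ.toLinearMap := by
  unfold MPE at hFΦ
  unfold PE
  simp only [m23] at hFΦ ⊢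
  apply lTensor_cancel (k := k) (V := V)
  simp only [LinearMap.lTensor_comp]
  have hK1 := K1lem F.toLinearMap Φ.toLinearMap
  have hI2V := I2lem (D := V) F.toLinearMap Φ.toLinearMap hFΦ
  have hI2M := I2lem (D := M) F.toLinearMap Φ.toLinearMap hFΦ
  have hI3 := I3lem F.toLinearMap Φ.toLinearMap hFΦ
  have hI1 := I1lem (B' := M) F.toLinearMap Φ.toLinearMap hFΦ
  have hCMφ := m12_comm_third (G := F.toLinearMap) (h := Φ.toLinearMap)
  have hCMf := m12_comm_third (G := F.toLinearMap) (h := F.toLinearMap)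
  have hkey := congrArg (LinearMap.lTensor V) hFΦ
  simp only [LinearMap.lTensor_comp] at hkey
  simp only [LinearMap.ext_iff, LinearMap.comp_apply] at hK1 hI2V hI2M hI3 hI1 hCMφ hCMf hkey
  refine LinearMap.ext fun x => ?_
  simp only [LinearMap.comp_apply]
  apply n14_inj (B := M) (C := M) F
  apply n13_inj (B := M) (D := V) F
  apply m12_inj (C := V ⊗[k] V) F
  rw [hK1, hI2V, hI3, hCMφ, hkey, hI1, hCMf, hI2M]

end
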